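/- Let n ≥ 1 be a natural number and let (Ψ_k(n))_{0 ≤ k ≤ ⌊n/2⌋} be the unique family of rational numbers such that for all complex x, y: x^n + y^n = (x+y)^(δ(n)) · ∑_{k=0}^{⌊n/2⌋} Ψ_k(n) (xy)^(⌊n/2⌋−k)(x²+y²)^k. Then Ψ_{⌊n/2⌋}(n) = 1, and for every k with 2 ≤ k ≤ ⌊n/2⌋: 16·k·(k−1)·Ψ_k(n) = −( (n + (−1)^(⌊n/2⌋ + k)·δ(n))² − (2k − 2 − 2·δ(n−1))² ) · Ψ_{k−2}(n). -/

import Mathlib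

open Polynomial Finset

noncomputable def ee (m k : ℕ) : ℂ[X] := X^(m-k) * (1+X^2)^k

lemma psi_ind (m : ℕ) (a : ℕ → ℂ)
    (h : ∑ k ∈ range (m+1), C (a k) * ee m k = 0) :
    ∀ k ≤ m, a k = 0 := by
  set q : ℂ[X] := ∑ k ∈ range (m+1), C (a k) * X^k with hq
  have hq0 : q = 0 := by
    apply Polynomial.funext
    intro u
    simp only [eval_zero]
    obtain ⟨x, hx⟩ : ∃ x : ℂ, x^2 - u*x + 1 = 0 := by
      obtain ⟨z, hz⟩ := Complex.exists_root (f := C 1 * X^2 + C (-u) * X + C 1)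
        (by rw [degree_quadratic one_ne_zero]; norm_num)
      simp only [IsRoot, eval_add, eval_mul, eval_pow, eval_C, eval_X] at hz
      exact ⟨z, by linear_combination hz⟩
    have hx0 : x ≠ 0 := by
      intro h0; rw [h0] at hx; simp at hx
    have hux : 1 + x^2 = u * x := by linear_combination hx
    have he := congrArg (Polynomial.eval x) h
    rw [eval_finset_sum, eval_zero] at he
    have he2 : ∑ k ∈ range (m+1), a k * u^k * x^m = 0 := by
      rw [← he]
      apply Finset.sum_congr rfl
      intro k hk
      have hkm : k ≤ m := Nat.lt_succ_iff.mp (mem_range.mp hk)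
      simp only [ee, eval_mul, eval_C, eval_pow, eval_add, eval_one, eval_X]
      rw [hux, mul_pow]
      have : x ^ (m-k) * x ^ k = x ^ m := by rw [← pow_add]; congr 1; omega
      rw [← this]; ring
    have he3 : (∑ k ∈ range (m+1), a k * u^k) * x^m = 0 := by
      rw [Finset.sum_mul]; exact he2
    have := (mul_eq_zero.mp he3).resolve_right (pow_ne_zero m hx0)
    rw [hq]
    simp only [eval_finset_sum, eval_mul, eval_C, eval_pow, eval_X]
    exact this
  intro k hk
  have : q.coeff k = 0 := by rw [hq0]; simp
  rw [hq, finset_sum_coeff] at this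
  simp only [coeff_C_mul, coeff_X_pow] at this
  rwa [Finset.sum_eq_single k (by intro b _ hb; simp [Ne.symm hb])
    (fun hk' => absurd (mem_range.2 (Nat.lt_succ_of_le hk)) hk'), if_pos rfl, mul_one] at this

lemma DXpow (a : ℕ) : X * derivative ((X:ℂ[X])^a) = C (a:ℂ) * X^a := by
  cases a with
  | zero => simp
  | succ b => rw [derivative_X_pow, Nat.add_sub_cancel, pow_succ]; ring

lemma Dpow2 (k : ℕ) (hk : 1 ≤ k) :
    X * derivative ((1+X^2 : ℂ[X])^k) = C (2*(k:ℂ)) * (X^2 * (1+X^2)^(k-1)) := by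
  rw [derivative_pow]
  simp only [derivative_add, derivative_one, derivative_X_pow]
  rw [map_mul]
  ring

lemma L0 (m k : ℕ) (hk : k < m) : X^2 * ee m k = X * ee m (k+1) - ee m k := by
  unfold ee
  have h1 : m - k = (m - (k+1)) + 1 := by omega
  rw [h1, pow_succ, pow_succ]
  ring

lemma Dee (m k : ℕ) (h1 : 1 ≤ k) (h2 : k ≤ m) :
    X * derivative (ee m k) = C (((m-k : ℕ)):ℂ) * ee m k + C (2*(k:ℂ)) * (X * ee m (k-1)) := by
  unfold ee
  rw [derivative_mul, mul_add, ← mul_assoc, DXpow]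
  congr 1
  · ring
  · rw [mul_comm X _, mul_assoc, mul_comm _ X,  Dpow2 k h1]
    have h3 : m - k + 2 = (m - (k-1)) + 1 := by omega
    rw [show (X:ℂ[X])^(m-k) * (C (2*(k:ℂ)) * (X^2*(1+X^2)^(k-1))) 
        = C (2*(k:ℂ)) * (X^(m-k+2) * (1+X^2)^(k-1)) by rw [pow_add]; ring, h3, pow_succ]
    ring

lemma DXee (m j : ℕ) (hj : j < m) :
    X * derivative (X * ee m j) =
      C ((m:ℂ)+j+1) * (X * ee m j) - C (2*(j:ℂ)) * ee m (j-1) := by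
  have hx : X * ee m j = X^(m-j+1) * ((1+X^2 : ℂ[X]))^j := by
    unfold ee; rw [pow_succ]; ring
  rw [hx, derivative_mul, mul_add, ← mul_assoc, DXpow]
  cases j with
  | zero => simp [ee]
  | succ i =>
    rw [show X * ((X:ℂ[X])^(m-(i+1)+1) * derivative ((1+X^2:ℂ[X])^(i+1)))
        = (X * derivative ((1+X^2:ℂ[X])^(i+1))) * X^(m-(i+1)+1) by ring,
      Dpow2 (i+1) (by omega)]
    have key : (X:ℂ[X])^2 * ee m i = X * ee m (i+1) - ee m i := L0 m i (by omega)
    simp only [show (i+1)-1 = i from rfl, show m-(i+1)+1 = m-i by omega] at *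
    rw [Nat.cast_sub (by omega : i ≤ m)]
    unfold ee at *
    simp only [map_sub, map_add, map_mul, map_one, map_natCast, map_ofNat]
    push_cast
    ring

lemma Lsum (d : ℂ) (N : ℕ) (g : ℕ → ℂ) (f : ℕ → ℂ[X]) :
    2*(X*derivative (∑ k ∈ range N, C (g k) * f k)) - C d * (∑ k ∈ range N, C (g k) * f k)
    = ∑ k ∈ range N, C (g k) * (2*(X*derivative (f k)) - C d * f k) := by
  rw [derivative_sum, Finset.mul_sum, Finset.mul_sum, Finset.mul_sum, ← Finset.sum_sub_distrib]
  apply Finset.sum_congr rfl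
  intro k _
  rw [derivative_C_mul]
  ring

lemma M1 (m k : ℕ) (hk : k ≤ m) :
    2*(X*derivative (ee m k)) - C (2*(m:ℂ)) * ee m k
      = C (-2*(k:ℂ)) * ee m k + C (4*(k:ℂ)) * (X * ee m (k-1)) := by
  rcases Nat.eq_zero_or_pos k with h0 | h1
  · subst h0
    simp only [ee, Nat.sub_zero, pow_zero, mul_one, Nat.cast_zero, neg_mul, mul_zero, neg_zero,
      map_zero, zero_mul, zero_add, add_zero]
    rw [show (2:ℂ[X])*(X*derivative (X^m)) = 2*(X*derivative ((X:ℂ[X])^m)) from rfl, DXpow]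
    simp only [map_mul, map_ofNat, map_natCast]
    ring
  · rw [Dee m k h1 hk, Nat.cast_sub hk]
    simp only [map_mul, map_add, map_sub, map_neg, map_ofNat, map_natCast]
    ring

lemma M2 (m k : ℕ) (h1 : 1 ≤ k) (h2 : k ≤ m) :
    2*(X*derivative (X * ee m (k-1))) - C (2*(m:ℂ)) * (X * ee m (k-1))
      = C (2*(k:ℂ)) * (X * ee m (k-1)) - C (4*((k:ℂ)-1)) * ee m (k-2) := by
  have := DXee m (k-1) (by omega)
  rw [show (k-1)-1 = k-2 by omega] at this
  rw [this, Nat.cast_sub h1]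
  simp only [map_mul, map_add, map_sub, map_neg, map_ofNat, map_natCast, map_one]
  push_cast
  ring

lemma termM2 (m k : ℕ) (hk : k ≤ m) :
    2*(X*derivative (C (-2*(k:ℂ)) * ee m k + C (4*(k:ℂ)) * (X * ee m (k-1))))
      - C (2*(m:ℂ)) * (C (-2*(k:ℂ)) * ee m k + C (4*(k:ℂ)) * (X * ee m (k-1)))
      = C (4*(k:ℂ)^2) * ee m k - C (16*(k:ℂ)*((k:ℂ)-1)) * ee m (k-2) := by
  rcases Nat.eq_zero_or_pos k with h0 | h1
  · subst h0; simp
  · rw [derivative_add, derivative_C_mul, derivative_C_mul]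
    have e1 := M1 m k hk
    have e2 := M2 m k h1 hk
    simp only [map_mul, map_add, map_sub, map_neg, map_ofNat, map_natCast, map_one, map_pow] at *
    linear_combination (-2*(k:ℂ[X]))*e1 + (4*(k:ℂ[X]))*e2

lemma coeff_top (m : ℕ) (γ : ℕ → ℂ) :
    (∑ k ∈ range (m+1), C (γ k) * ee m k).coeff (2*m) = γ m := by
  rw [finset_sum_coeff, Finset.sum_range_succ]
  have hz : ∀ k ∈ range m, (C (γ k) * ee m k).coeff (2*m) = 0 := by
    intro k hk
    have hkm : k < m := mem_range.mp hk
    apply coeff_eq_zero_of_natDegree_lt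
    calc (C (γ k) * ee m k).natDegree
        ≤ natDegree (C (γ k)) + natDegree (ee m k) := natDegree_mul_le
      _ ≤ 0 + ((m-k) + 2*k) := by
          apply add_le_add (le_of_eq (natDegree_C _))
          unfold ee
          calc natDegree _ ≤ natDegree ((X:ℂ[X])^(m-k)) + natDegree ((1+X^2:ℂ[X])^k) :=
            natDegree_mul_le
          _ ≤ (m-k) + 2*k := by
              apply add_le_add (le_of_eq (natDegree_X_pow _))
              calc natDegree ((1+X^2:ℂ[X])^k) ≤ k * natDegree (1+X^2:ℂ[X]) := natDegree_pow_le
                _ ≤ 2*k := by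
                    rw [show (1+X^2:ℂ[X]) = X^2 + C 1 by rw [map_one]; ring,
                      natDegree_X_pow_add_C]
                    omega
      _ < 2*m := by omega
  rw [Finset.sum_eq_zero hz, zero_add]
  have hmon : ((1:ℂ[X])+X^2).Monic := by
    rw [show (1+X^2:ℂ[X]) = X^2 + C 1 by rw [map_one]; ring]
    exact monic_X_pow_add_C 1 (by norm_num)
  have hdeg : (((1:ℂ[X])+X^2)^m).natDegree = 2*m := by
    rw [hmon.natDegree_pow,
      show (1+X^2:ℂ[X]) = X^2 + C 1 by rw [map_one]; ring, natDegree_X_pow_add_C]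
    omega
  have hcf : (((1:ℂ[X])+X^2)^m).coeff (2*m) = 1 := by
    rw [← hdeg]; exact (hmon.pow m).coeff_natDegree
  unfold ee
  simp only [Nat.sub_self, pow_zero, one_mul, coeff_C_mul, hcf, mul_one]


lemma even_main (m : ℕ) (hm : 1 ≤ m) (γ : ℕ → ℂ)
    (h1 : ∑ k ∈ range (m+1), C (γ k) * ee m k = 1 + X^(2*m)) :
    γ m = 1 ∧ ∀ k, k + 2 ≤ m →
      16*((k:ℂ)+2)*((k:ℂ)+1)*γ (k+2) = (4*(k:ℂ)^2 - (2*(m:ℂ))^2) * γ k := by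
  have hcm : γ m = 1 := by
    have := coeff_top m γ
    rw [h1] at this
    rw [coeff_add, coeff_one, coeff_X_pow] at this
    simp only [if_neg (by omega : ¬ (2*m = 0))] at this
    simpa using this.symm
  refine ⟨hcm, ?_⟩
  -- first application of M
  have E1 : ∑ k ∈ range (m+1), C (γ k) *
        (C (-2*(k:ℂ)) * ee m k + C (4*(k:ℂ)) * (X * ee m (k-1)))
      = C (2*(m:ℂ)) * X^(2*m) - C (2*(m:ℂ)) := by
    have step : ∑ k ∈ range (m+1), C (γ k) *
          (C (-2*(k:ℂ)) * ee m k + C (4*(k:ℂ)) * (X * ee m (k-1)))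
        = ∑ k ∈ range (m+1), C (γ k) * (2*(X*derivative (ee m k)) - C (2*(m:ℂ)) * ee m k) := by
      apply Finset.sum_congr rfl
      intro k hk
      rw [M1 m k (by have := mem_range.mp hk; omega)]
    rw [step, ← Lsum, h1]
    rw [derivative_add, derivative_one, zero_add, DXpow]
    simp only [map_mul, map_ofNat, map_natCast, map_one, map_add]
    push_cast
    ring
  -- second application of M
  have E2 : ∑ k ∈ range (m+1), C (γ k) *
        (C (4*(k:ℂ)^2) * ee m k - C (16*(k:ℂ)*((k:ℂ)-1)) * ee m (k-2))
      = C (4*(m:ℂ)^2) * ∑ k ∈ range (m+1), C (γ k) * ee m k := by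
    have step : ∑ k ∈ range (m+1), C (γ k) *
          (C (4*(k:ℂ)^2) * ee m k - C (16*(k:ℂ)*((k:ℂ)-1)) * ee m (k-2))
        = ∑ k ∈ range (m+1), C (γ k) *
            (2*(X*derivative (C (-2*(k:ℂ)) * ee m k + C (4*(k:ℂ)) * (X * ee m (k-1))))
              - C (2*(m:ℂ)) * (C (-2*(k:ℂ)) * ee m k + C (4*(k:ℂ)) * (X * ee m (k-1)))) := by
      apply Finset.sum_congr rfl
      intro k hk
      rw [termM2 m k (by have := mem_range.mp hk; omega)]
    rw [step, ← Lsum, E1, h1]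
    rw [derivative_sub, derivative_C_mul, derivative_C, sub_zero,
      show X * (C (2*(m:ℂ)) * derivative (X^(2*m))) = C (2*(m:ℂ)) * (X * derivative ((X:ℂ[X])^(2*m))) by ring,
      DXpow]
    simp only [map_mul, map_ofNat, map_natCast, map_one, map_add, map_pow]
    push_cast
    ring
  -- rearrange into a single vanishing sum
  set a : ℕ → ℂ := fun k => (4*(k:ℂ)^2 - 4*(m:ℂ)^2) * γ k -
      (if k + 2 ≤ m then 16*((k:ℂ)+2)*((k:ℂ)+1)*γ (k+2) else 0) with ha
  have hshift : ∑ k ∈ range (m+1),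
        C (if k + 2 ≤ m then 16*((k:ℂ)+2)*((k:ℂ)+1)*γ (k+2) else 0) * ee m k
      = ∑ k ∈ range (m+1), C (16*(k:ℂ)*((k:ℂ)-1)*γ k) * ee m (k-2) := by
    have hL : ∑ k ∈ range (m+1),
          C (if k + 2 ≤ m then 16*((k:ℂ)+2)*((k:ℂ)+1)*γ (k+2) else 0) * ee m k
        = ∑ k ∈ range (m-1), C (16*((k:ℂ)+2)*((k:ℂ)+1)*γ (k+2)) * ee m k := by
      rw [show m+1 = (m-1)+1+1 by omega, Finset.sum_range_succ, Finset.sum_range_succ]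
      rw [if_neg (by omega), if_neg (by omega), map_zero, zero_mul, zero_mul, add_zero, add_zero]
      apply Finset.sum_congr rfl
      intro k hk
      rw [if_pos (by have := mem_range.mp hk; omega)]
    have hR : ∑ k ∈ range (m+1), C (16*(k:ℂ)*((k:ℂ)-1)*γ k) * ee m (k-2)
        = ∑ k ∈ range (m-1), C (16*((k:ℂ)+2)*((k:ℂ)+1)*γ (k+2)) * ee m k := by
      rw [show m+1 = (m-1)+1+1 by omega, Finset.sum_range_succ', Finset.sum_range_succ']
      have z0 : (16*((0:ℕ):ℂ)*(((0:ℕ):ℂ)-1)*γ 0) = 0 := by push_cast; ring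
      have z1 : (16*((0+1:ℕ):ℂ)*(((0+1:ℕ):ℂ)-1)*γ (0+1)) = 0 := by push_cast; ring
      rw [z0, z1]
      simp only [map_zero, zero_mul, add_zero]
      apply Finset.sum_congr rfl
      intro k _
      rw [show k+1+1 = k+2 by omega, show k+2-2 = k by omega,
        show (16*((k+2:ℕ):ℂ)*(((k+2:ℕ):ℂ)-1)*γ (k+2)) = 16*((k:ℂ)+2)*((k:ℂ)+1)*γ (k+2) by
          push_cast; ring]
    rw [hL, hR]
  have hvan : ∑ k ∈ range (m+1), C (a k) * ee m k = 0 := by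
    have split : ∑ k ∈ range (m+1), C (a k) * ee m k
        = ∑ k ∈ range (m+1), C ((4*(k:ℂ)^2 - 4*(m:ℂ)^2) * γ k) * ee m k
          - ∑ k ∈ range (m+1),
              C (if k + 2 ≤ m then 16*((k:ℂ)+2)*((k:ℂ)+1)*γ (k+2) else 0) * ee m k := by
      rw [← Finset.sum_sub_distrib]
      apply Finset.sum_congr rfl
      intro k _
      rw [ha, map_sub, sub_mul]
    rw [split, hshift]
    have expand : ∑ k ∈ range (m+1), C ((4*(k:ℂ)^2 - 4*(m:ℂ)^2) * γ k) * ee m k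
          - ∑ k ∈ range (m+1), C (16*(k:ℂ)*((k:ℂ)-1)*γ k) * ee m (k-2)
        = (∑ k ∈ range (m+1), C (γ k) *
            (C (4*(k:ℂ)^2) * ee m k - C (16*(k:ℂ)*((k:ℂ)-1)) * ee m (k-2)))
          - C (4*(m:ℂ)^2) * ∑ k ∈ range (m+1), C (γ k) * ee m k := by
      rw [Finset.mul_sum, ← Finset.sum_sub_distrib, ← Finset.sum_sub_distrib]
      apply Finset.sum_congr rfl
      intro k _
      simp only [map_sub, map_mul, map_ofNat, map_natCast, map_one, map_pow]
      ring
    rw [expand, E2, sub_self]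
  have hind := psi_ind m a hvan
  intro k hk
  have := hind k (by omega)
  rw [ha] at this
  simp only [if_pos hk] at this
  linear_combination -this

lemma ee_term_deg (m k : ℕ) (z : ℂ) (hk : k ≤ m) : (C z * ee m k).natDegree ≤ m + k := by
  calc (C z * ee m k).natDegree
      ≤ natDegree (C z) + natDegree (ee m k) := natDegree_mul_le
    _ ≤ 0 + ((m-k) + 2*k) := by
        apply add_le_add (le_of_eq (natDegree_C _))
        unfold ee
        calc natDegree _ ≤ natDegree ((X:ℂ[X])^(m-k)) + natDegree ((1+X^2:ℂ[X])^k) :=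
          natDegree_mul_le
        _ ≤ (m-k) + 2*k := by
            apply add_le_add (le_of_eq (natDegree_X_pow _))
            calc natDegree ((1+X^2:ℂ[X])^k) ≤ k * natDegree (1+X^2:ℂ[X]) := natDegree_pow_le
              _ ≤ 2*k := by
                  rw [show (1+X^2:ℂ[X]) = X^2 + C 1 by rw [map_one]; ring,
                    natDegree_X_pow_add_C]
                  omega
    _ ≤ m + k := by omega

lemma Pdeg (m : ℕ) (γ : ℕ → ℂ) :
    (∑ k ∈ range (m+1), C (γ k) * ee m k).coeff (2*m+1) = 0 := by
  rw [finset_sum_coeff]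
  apply Finset.sum_eq_zero
  intro k hk
  have hkm : k ≤ m := by have := mem_range.mp hk; omega
  apply coeff_eq_zero_of_natDegree_lt
  have := ee_term_deg m k (γ k) hkm
  omega

lemma term_odd (m k : ℕ) (hk : k ≤ m) :
    2*X*(ee m k) + (1+X)*(2*(X*derivative (ee m k)) - C (2*(m:ℂ)+1) * ee m k)
      = (X-1)*(C (2*(k:ℂ)+1) * ee m k + C (4*(k:ℂ)) * ee m (k-1)) := by
  rcases Nat.eq_zero_or_pos k with h0 | h1
  · subst h0
    simp only [ee, Nat.sub_zero, pow_zero, mul_one, Nat.cast_zero, mul_zero, zero_add, add_zero,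
      map_zero, zero_mul]
    rw [show (2:ℂ[X])*(X*derivative (X^m)) = 2*(X*derivative ((X:ℂ[X])^m)) from rfl, DXpow]
    simp only [map_mul, map_add, map_ofNat, map_natCast, map_one]
    ring
  · rw [Dee m k h1 hk, Nat.cast_sub hk]
    have key := L0 m (k-1) (by omega)
    rw [show k-1+1 = k by omega] at key
    simp only [map_mul, map_add, map_sub, map_neg, map_ofNat, map_natCast, map_one] at *
    linear_combination (4*(k:ℂ[X]))*key

lemma odd_main (m : ℕ) (γ : ℕ → ℂ)
    (h1 : (1+X) * ∑ k ∈ range (m+1), C (γ k) * ee m k = 1 + X^(2*m+1))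
    (h2 : (X-1) * ∑ k ∈ range (m+1), C ((-1)^(m-k) * γ k) * ee m k = X^(2*m+1) - 1) :
    γ m = 1 ∧ ∀ k, k < m →
      (2*(k:ℂ)+1)*γ k + 4*((k:ℂ)+1)*γ (k+1) = (-1)^(m-k)*(2*(m:ℂ)+1)*γ k := by
  have hcm : γ m = 1 := by
    have hco := congrArg (fun p => Polynomial.coeff p (2*m+1)) h1
    rw [add_mul, one_mul, coeff_add, coeff_X_mul, coeff_add, coeff_one, coeff_X_pow,
      Pdeg, coeff_top] at hco
    simp only [if_neg (by omega : ¬ (2*m+1 = 0)), if_pos rfl] at hco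
    simpa using hco
  refine ⟨hcm, ?_⟩
  have hcancel : ∑ k ∈ range (m+1), C (γ k) *
        (C (2*(k:ℂ)+1) * ee m k + C (4*(k:ℂ)) * ee m (k-1))
      = C (2*(m:ℂ)+1) * ∑ k ∈ range (m+1), C ((-1)^(m-k) * γ k) * ee m k := by
    apply mul_left_cancel₀ (show (X - 1 : ℂ[X]) ≠ 0 by
      rw [show (X - 1 : ℂ[X]) = X - C 1 by rw [map_one]]
      exact X_sub_C_ne_zero 1)
    have lhs1 : (X-1) * ∑ k ∈ range (m+1), C (γ k) *
          (C (2*(k:ℂ)+1) * ee m k + C (4*(k:ℂ)) * ee m (k-1))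
        = ∑ k ∈ range (m+1), C (γ k) *
            (2*X*(ee m k) + (1+X)*(2*(X*derivative (ee m k)) - C (2*(m:ℂ)+1) * ee m k)) := by
      rw [Finset.mul_sum]
      apply Finset.sum_congr rfl
      intro k hk
      rw [term_odd m k (by have := mem_range.mp hk; omega)]
      ring
    have lhs2 : ∑ k ∈ range (m+1), C (γ k) *
          (2*X*(ee m k) + (1+X)*(2*(X*derivative (ee m k)) - C (2*(m:ℂ)+1) * ee m k))
        = 2*X*(∑ k ∈ range (m+1), C (γ k) * ee m k)
          + (1+X)*(2*(X*derivative (∑ k ∈ range (m+1), C (γ k) * ee m k))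
              - C (2*(m:ℂ)+1) * (∑ k ∈ range (m+1), C (γ k) * ee m k)) := by
      rw [Lsum]
      simp only [Finset.mul_sum, ← Finset.sum_add_distrib]
      apply Finset.sum_congr rfl
      intro k _
      ring
    have lhs3 : 2*X*(∑ k ∈ range (m+1), C (γ k) * ee m k)
          + (1+X)*(2*(X*derivative (∑ k ∈ range (m+1), C (γ k) * ee m k))
              - C (2*(m:ℂ)+1) * (∑ k ∈ range (m+1), C (γ k) * ee m k))
        = 2*(X*derivative ((1+X) * ∑ k ∈ range (m+1), C (γ k) * ee m k))
          - C (2*(m:ℂ)+1) * ((1+X) * ∑ k ∈ range (m+1), C (γ k) * ee m k) := by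
      rw [derivative_mul, derivative_add, derivative_one, derivative_X]
      ring
    rw [lhs1, lhs2, lhs3, h1]
    rw [derivative_add, derivative_one, zero_add, DXpow]
    rw [mul_left_comm (X-1) (C (2*(m:ℂ)+1)), h2]
    simp only [map_mul, map_add, map_ofNat, map_natCast, map_one]
    push_cast
    ring
  set a : ℕ → ℂ := fun k => (2*(k:ℂ)+1)*γ k
      + (if k < m then 4*((k:ℂ)+1)*γ (k+1) else 0)
      - (-1)^(m-k)*(2*(m:ℂ)+1)*γ k with ha
  have hshift : ∑ k ∈ range (m+1), C (if k < m then 4*((k:ℂ)+1)*γ (k+1) else 0) * ee m k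
      = ∑ k ∈ range (m+1), C (4*(k:ℂ)*γ k) * ee m (k-1) := by
    rw [Finset.sum_range_succ, if_neg (by omega), map_zero, zero_mul, add_zero]
    rw [Finset.sum_range_succ' (fun k => C (4*(k:ℂ)*γ k) * ee m (k-1)) m]
    rw [show (4*((0:ℕ):ℂ)*γ 0) = 0 by push_cast; ring]
    simp only [map_zero, zero_mul, add_zero]
    apply Finset.sum_congr rfl
    intro k hk
    rw [if_pos (mem_range.mp hk), show k+1-1 = k by omega,
      show (4*((k+1:ℕ):ℂ)*γ (k+1)) = 4*((k:ℂ)+1)*γ (k+1) by push_cast; ring]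
  have hvan : ∑ k ∈ range (m+1), C (a k) * ee m k = 0 := by
    have split : ∑ k ∈ range (m+1), C (a k) * ee m k
        = (∑ k ∈ range (m+1), C ((2*(k:ℂ)+1)*γ k) * ee m k
            + ∑ k ∈ range (m+1), C (if k < m then 4*((k:ℂ)+1)*γ (k+1) else 0) * ee m k)
          - ∑ k ∈ range (m+1), C ((-1)^(m-k)*(2*(m:ℂ)+1)*γ k) * ee m k := by
      rw [← Finset.sum_add_distrib, ← Finset.sum_sub_distrib]
      apply Finset.sum_congr rfl
      intro k _
      rw [ha, map_sub, map_add, sub_mul, add_mul]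
    rw [split, hshift]
    have lhs' : ∑ k ∈ range (m+1), C ((2*(k:ℂ)+1)*γ k) * ee m k
          + ∑ k ∈ range (m+1), C (4*(k:ℂ)*γ k) * ee m (k-1)
        = ∑ k ∈ range (m+1), C (γ k) *
            (C (2*(k:ℂ)+1) * ee m k + C (4*(k:ℂ)) * ee m (k-1)) := by
      rw [← Finset.sum_add_distrib]
      apply Finset.sum_congr rfl
      intro k _
      simp only [map_mul, map_add, map_ofNat, map_natCast, map_one]
      ring
    have rhs' : ∑ k ∈ range (m+1), C ((-1)^(m-k)*(2*(m:ℂ)+1)*γ k) * ee m k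
        = C (2*(m:ℂ)+1) * ∑ k ∈ range (m+1), C ((-1)^(m-k) * γ k) * ee m k := by
      rw [Finset.mul_sum]
      apply Finset.sum_congr rfl
      intro k _
      simp only [map_mul, map_add, map_neg, map_pow, map_ofNat, map_natCast, map_one]
      ring
    rw [lhs', rhs', hcancel, sub_self]
  have hind := psi_ind m a hvan
  intro k hk
  have := hind k (by omega)
  rw [ha] at this
  simp only [if_pos hk] at this
  linear_combination this

/-- Generating the Ψ-integers from the previous term. -/
theorem psi_ratio (n : ℕ) (hn : 1 ≤ n) (c : ℕ → ℚ)
    (hc : ∀ x y : ℂ, x ^ n + y ^ n =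
      (x + y) ^ (n % 2) * ∑ k ∈ Finset.range (n / 2 + 1),
        (c k : ℂ) * (x * y) ^ (n / 2 - k) * (x ^ 2 + y ^ 2) ^ k) :
    c (n / 2) = 1 ∧
    ∀ k, 2 ≤ k → k ≤ n / 2 →
      16 * (k : ℚ) * ((k : ℚ) - 1) * c k =
        -(((n : ℚ) + (-1 : ℚ) ^ (n / 2 + k) * ((n % 2 : ℕ) : ℚ)) ^ 2 -
          (2 * (k : ℚ) - 2 - 2 * (((n - 1) % 2 : ℕ) : ℚ)) ^ 2) * c (k - 2) := by
  set m := n / 2 with hm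
  have heval : ∀ (γ : ℕ → ℂ) (x : ℂ),
      eval x (∑ k ∈ range (m+1), C (γ k) * ee m k)
        = ∑ k ∈ range (m+1), γ k * x^(m-k) * (x^2+1)^k := by
    intro γ x
    rw [eval_finset_sum]
    apply Finset.sum_congr rfl
    intro k _
    simp only [ee, eval_mul, eval_C, eval_pow, eval_add, eval_one, eval_X]
    ring
  rcases Nat.even_or_odd n with he | ho
  · -- even case
    obtain ⟨m', hm'⟩ := he
    have hnm : n = 2*m := by omega
    have hm1 : 1 ≤ m := by omega
    have hn2 : n % 2 = 0 := by omega
    have hn12 : (n-1) % 2 = 1 := by omega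
    have h1 : ∑ k ∈ range (m+1), C ((c k : ℂ)) * ee m k = 1 + X^(2*m) := by
      apply Polynomial.funext
      intro x
      have h := hc x 1
      simp only [one_pow, mul_one, hn2, pow_zero, one_mul] at h
      rw [heval, eval_add, eval_one, eval_pow, eval_X, ← hnm, ← h]
      ring
    obtain ⟨hc1, hrel⟩ := even_main m hm1 (fun k => ((c k : ℚ) : ℂ)) h1
    constructor
    · exact_mod_cast hc1
    · intro k hk2 hkm
      obtain ⟨j, rfl⟩ : ∃ j, k = j + 2 := ⟨k - 2, by omega⟩
      have := hrel j (by omega)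
      have hq : 16*((j:ℚ)+2)*((j:ℚ)+1)* c (j+2) = (4*(j:ℚ)^2 - (2*(m:ℚ))^2) * c j := by
        exact_mod_cast this
      rw [hn2, hn12, hnm, show (j+2)-2 = j by omega]
      push_cast
      linear_combination hq
  · -- odd case
    obtain ⟨m', hm'⟩ := ho
    have hnm : n = 2*m+1 := by omega
    have hn2 : n % 2 = 1 := by omega
    have hn12 : (n-1) % 2 = 0 := by omega
    have h1 : (1+X) * ∑ k ∈ range (m+1), C ((c k : ℂ)) * ee m k = 1 + X^(2*m+1) := by
      apply Polynomial.funext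
      intro x
      have h := hc x 1
      simp only [one_pow, mul_one, hn2, pow_one] at h
      rw [eval_mul, eval_add, eval_one, eval_X, heval, eval_add, eval_one, eval_pow, eval_X,
        ← hnm]
      linear_combination -h
    have h2 : (X-1) * ∑ k ∈ range (m+1), C ((-1)^(m-k) * (c k : ℂ)) * ee m k
        = X^(2*m+1) - 1 := by
      apply Polynomial.funext
      intro x
      have h := hc x (-1)
      simp only [hn2, pow_one] at h
      rw [hnm] at h
      rw [eval_mul, eval_sub, eval_one, eval_X, heval, eval_sub, eval_one, eval_pow, eval_X]
      have hodd : ((-1:ℂ))^(2*m+1) = -1 := by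
        rw [pow_succ, pow_mul]
        norm_num
      rw [hodd] at h
      have hs : ∑ k ∈ range (m+1), (-1:ℂ)^(m-k) * (c k : ℂ) * x^(m-k) * (x^2+1)^k
          = ∑ k ∈ range (m+1), (c k : ℂ) * (x * -1)^(m-k) * (x^2 + (-1)^2)^k := by
        apply Finset.sum_congr rfl
        intro k _
        rw [mul_pow, show ((-1:ℂ))^2 = 1 by norm_num]
        ring
      rw [hs]
      linear_combination -h
    obtain ⟨hc1, hrel⟩ := odd_main m (fun k => ((c k : ℚ) : ℂ)) h1 h2
    constructor
    · exact_mod_cast hc1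
    · intro k hk2 hkm
      obtain ⟨j, rfl⟩ : ∃ j, k = j + 2 := ⟨k - 2, by omega⟩
      have e1c := hrel j (by omega)
      have e2c := hrel (j+1) (by omega)
      have e1 : (2*(j:ℚ)+1)* c j + 4*((j:ℚ)+1)* c (j+1) = (-1)^(m-j)*(2*(m:ℚ)+1)* c j := by
        exact_mod_cast e1c
      have e2 : (2*((j:ℚ)+1)+1)* c (j+1) + 4*((j:ℚ)+2)* c (j+2)
          = (-1)^(m-(j+1))*(2*(m:ℚ)+1)* c (j+1) := by
        exact_mod_cast e2c
      set ε : ℚ := (-1)^(m-j) with hε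
      have hee : ((-1:ℚ))^(m-(j+1)) = -ε := by
        rw [hε, show m-j = (m-(j+1))+1 by omega, pow_succ]
        ring
      have hε2 : ε*ε = 1 := by
        rw [hε, ← pow_add, show (m-j)+(m-j) = 2*(m-j) by ring, pow_mul]
        norm_num
      have hεg : ((-1:ℚ))^(m+(j+2)) = ε := by
        rw [hε, show m+(j+2) = (m-j) + 2*(j+1) by omega, pow_add, pow_mul]
        norm_num
      rw [hee] at e2
      rw [hn2, hn12, hnm, show (j+2)-2 = j by omega]
      push_cast
      rw [hεg]
      linear_combination (4*((j:ℚ)+1))*e2 + (-(2*(j:ℚ)+3+ε*(2*(m:ℚ)+1)))*e1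
        + (-(((2*(m:ℚ)+1)^2-1))* c j)*hε2
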